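/- Let k, l, p be positive integers and f(y₁,…,y_p) = (y₁^{2kl} + … + y_p^{2kl})^{1/l}. Then every partial derivative of f of order at most k vanishes at the origin 0 ∈ ℝ^p. -/

import Mathlib

open scoped BigOperators

-- Key lemma: homogeneity propagates through fderiv even without differentiability assumptions
lemma fderiv_scale {p : ℕ} {E : Type*} [NormedAddCommGroup E] [NormedSpace ℝ E]
    (g : (Fin p → ℝ) → E) (a : ℝ) (ha : a ≠ 0)
    (hg : ∀ y, g ((2:ℝ) • y) = a • g y) (y : Fin p → ℝ) :
    fderiv ℝ g ((2:ℝ) • y) = (a * 2⁻¹) • fderiv ℝ g y := by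
  by_cases hd : DifferentiableAt ℝ g ((2:ℝ) • y)
  · have h1 : HasFDerivAt (fun z : Fin p → ℝ => (2:ℝ) • z)
        ((2:ℝ) • ContinuousLinearMap.id ℝ (Fin p → ℝ)) y :=
      (hasFDerivAt_id y).const_smul (2:ℝ)
    have h2 : HasFDerivAt (fun z => g ((2:ℝ) • z))
        ((fderiv ℝ g ((2:ℝ) • y)).comp ((2:ℝ) • ContinuousLinearMap.id ℝ (Fin p → ℝ))) y :=
      hd.hasFDerivAt.comp y h1
    have h3 : HasFDerivAt (fun z => a • g z)
        ((fderiv ℝ g ((2:ℝ) • y)).comp ((2:ℝ) • ContinuousLinearMap.id ℝ (Fin p → ℝ))) y := by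
      have : (fun z => g ((2:ℝ) • z)) = fun z => a • g z := funext hg
      rwa [this] at h2
    have h4 : HasFDerivAt g
        (a⁻¹ • (fderiv ℝ g ((2:ℝ) • y)).comp ((2:ℝ) • ContinuousLinearMap.id ℝ (Fin p → ℝ))) y := by
      have := h3.fun_const_smul a⁻¹
      simpa [smul_smul, inv_mul_cancel₀ ha] using this
    rw [h4.fderiv]
    ext v
    simp [smul_smul]
    ring_nf
    rw [mul_comm a a⁻¹, inv_mul_cancel₀ ha]
    simp
  · have hd' : ¬ DifferentiableAt ℝ g y := by
      intro h
      apply hd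
      have hag : DifferentiableAt ℝ (fun z => a • g z) y := h.const_smul a
      have hcomp : DifferentiableAt ℝ (fun z => g ((2:ℝ) • z)) y := by
        have : (fun z => g ((2:ℝ) • z)) = fun z => a • g z := funext hg
        rw [this]; exact hag
      have hhalf : DifferentiableAt ℝ (fun z : Fin p → ℝ => (2:ℝ)⁻¹ • z) ((2:ℝ) • y) :=
        differentiableAt_fun_id.fun_const_smul _
      have hc2 : DifferentiableAt ℝ (fun z => g ((2:ℝ) • z)) ((2:ℝ)⁻¹ • ((2:ℝ) • y)) := by
        simpa [smul_smul] using hcomp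
      have : DifferentiableAt ℝ ((fun z => g ((2:ℝ) • z)) ∘ (fun z : Fin p → ℝ => (2:ℝ)⁻¹ • z))
          ((2:ℝ) • y) := hc2.comp _ hhalf
      have heq : ((fun z => g ((2:ℝ) • z)) ∘ (fun z : Fin p → ℝ => (2:ℝ)⁻¹ • z)) = g := by
        funext w
        simp [Function.comp, smul_smul]
      rwa [heq] at this
    rw [fderiv_zero_of_not_differentiableAt hd, fderiv_zero_of_not_differentiableAt hd',
      smul_zero]

lemma f_scale (k l p : ℕ) (hl : 0 < l) (y : Fin p → ℝ) :
    (∑ i, (((2:ℝ) • y) i) ^ (2 * k * l)) ^ ((1 : ℝ) / l)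
      = ((2:ℝ) ^ (2 * k)) • (∑ i, (y i) ^ (2 * k * l)) ^ ((1 : ℝ) / l) := by
  have hsum : ∀ z : Fin p → ℝ, (0:ℝ) ≤ ∑ i, (z i) ^ (2 * k * l) := fun z =>
    Finset.sum_nonneg fun i _ => Even.pow_nonneg ⟨k * l, by ring⟩ _
  have h1 : (∑ i, (((2:ℝ) • y) i) ^ (2 * k * l))
      = ((2:ℝ) ^ (2 * k)) ^ l * ∑ i, (y i) ^ (2 * k * l) := by
    rw [Finset.mul_sum]
    refine Finset.sum_congr rfl fun i _ => ?_
    simp [mul_pow, ← pow_mul]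
  rw [h1, Real.mul_rpow (by positivity) (hsum y)]
  congr 1
  rw [← Real.rpow_natCast ((2:ℝ) ^ (2 * k)) l, ← Real.rpow_mul (by positivity)]
  rw [mul_one_div, div_self (by exact_mod_cast hl.ne'), Real.rpow_one]

lemma iter_scale (k l p : ℕ) (hl : 0 < l) (j : ℕ) (y : Fin p → ℝ) :
    iteratedFDeriv ℝ j
        (fun y : Fin p → ℝ => (∑ i, (y i) ^ (2 * k * l)) ^ ((1 : ℝ) / l)) ((2:ℝ) • y)
      = ((2:ℝ) ^ (2 * k) * ((2:ℝ)⁻¹) ^ j) • iteratedFDeriv ℝ j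
        (fun y : Fin p → ℝ => (∑ i, (y i) ^ (2 * k * l)) ^ ((1 : ℝ) / l)) y := by
  induction j generalizing y with
  | zero =>
    ext m
    simp only [iteratedFDeriv_zero_apply, ContinuousMultilinearMap.smul_apply]
    rw [f_scale k l p hl y]
    simp [smul_eq_mul]
  | succ j ih =>
    rw [iteratedFDeriv_succ_eq_comp_left]
    simp only [Function.comp_apply]
    rw [fderiv_scale _ ((2:ℝ) ^ (2 * k) * ((2:ℝ)⁻¹) ^ j) (by positivity) (fun y => ih y) y]
    rw [map_smul]
    congr 1
    ring

theorem stmt_1 (k l p : ℕ) (hk : 0 < k) (hl : 0 < l) (hp : 0 < p) :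
    ∀ j : ℕ, j ≤ k →
      iteratedFDeriv ℝ j
        (fun y : Fin p → ℝ => (∑ i, (y i) ^ (2 * k * l)) ^ ((1 : ℝ) / l)) 0 = 0 := by
  intro j hj
  have h := iter_scale k l p hl j 0
  rw [smul_zero] at h
  set v := iteratedFDeriv ℝ j
    (fun y : Fin p → ℝ => (∑ i, (y i) ^ (2 * k * l)) ^ ((1 : ℝ) / l)) 0 with hv
  have h2 : ((2:ℝ) ^ (2 * k) * ((2:ℝ)⁻¹) ^ j - 1) • v = 0 := by
    rw [sub_smul, one_smul, ← h, sub_self]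
  have h3 : (2:ℝ) ^ (2 * k) * ((2:ℝ)⁻¹) ^ j - 1 ≠ 0 := by
    have hlt : (2:ℝ) ^ j < (2:ℝ) ^ (2 * k) := by
      apply pow_lt_pow_right₀ one_lt_two
      omega
    rw [inv_pow]
    intro habs
    rw [sub_eq_zero, mul_inv_eq_one₀ (by positivity)] at habs
    exact absurd habs hlt.ne'
  exact (smul_eq_zero.mp h2).resolve_left h3
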